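/- If G - xy is k-colorable and G is not k-colorable, then for every r with 2 ≤ r ≤ k, the edge xy belongs to at least ∏_{i=1}^{r-1}(k-i) cycles in G whose lengths are congruent to 1 modulo r. -/

import Mathlib

/-- `H` is a cycle subgraph of `G` of length `n`: it is the subgraph traced by some
cycle (closed walk with distinct internal vertices) of length `n`. -/
def SimpleGraph.IsCycleSubgraph {V : Type*} (G : SimpleGraph V) (H : G.Subgraph) (n : ℕ) : Prop :=
  ∃ (v : V) (w : G.Walk v v), w.IsCycle ∧ w.length = n ∧ w.toSubgraph = H

open SimpleGraph Walk

section Aux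

variable {V : Type*}

/-- A path between two vertices is determined by its edge set. -/
theorem path_eq_of_edges_iff {G : SimpleGraph V} {u v : V} (p : G.Walk u v) :
    ∀ q : G.Walk u v, p.IsPath → q.IsPath → (∀ e, e ∈ p.edges ↔ e ∈ q.edges) → p = q := by
  induction p with
  | nil =>
    intro q _ hq _
    exact (Walk.isPath_iff_eq_nil).mp hq |>.symm
  | @cons u w v h p ih =>
    intro q hp hq he
    cases q with
    | nil =>
      exfalso
      have : s(u, w) ∈ (Walk.nil : G.Walk u u).edges := (he _).mp (by simp)
      simp at this
    | @cons _ w2 _ h2 q' =>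
      rw [Walk.cons_isPath_iff] at hp hq
      have hmem : s(u, w) ∈ (Walk.cons h2 q').edges := (he _).mp (by simp)
      rw [Walk.edges_cons, List.mem_cons] at hmem
      have hww2 : w = w2 := by
        rcases hmem with hmem | hmem
        · rw [Sym2.eq_iff] at hmem
          rcases hmem with ⟨-, h'⟩ | ⟨h', h''⟩
          · exact h'
          · exact absurd (h'' ▸ h) G.irrefl
        · exact absurd (q'.fst_mem_support_of_mem_edges hmem) hq.2
      subst hww2
      have heq : p = q' := by
        refine ih q' hp.1 hq.1 fun e => ⟨fun hep => ?_, fun heq => ?_⟩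
        · have : e ∈ (Walk.cons h2 q').edges := (he _).mp (by simp [hep])
          rw [Walk.edges_cons, List.mem_cons] at this
          rcases this with rfl | h' 
          · exact absurd (p.fst_mem_support_of_mem_edges hep) hp.2
          · exact h'
        · have : e ∈ (Walk.cons h p).edges := (he _).mpr (by simp [heq])
          rw [Walk.edges_cons, List.mem_cons] at this
          rcases this with rfl | h'
          · exact absurd (q'.fst_mem_support_of_mem_edges heq) hq.2
          · exact h'
      rw [heq]

theorem getVert_transfer {G H : SimpleGraph V} :
    ∀ {u v : V} (p : G.Walk u v) (hp : ∀ e ∈ p.edges, e ∈ H.edgeSet) (i : ℕ),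
      (p.transfer H hp).getVert i = p.getVert i := by
  intro u v p
  induction p with
  | nil => intro hp i; rfl
  | cons h p ih =>
    intro hp i
    cases i with
    | zero => simp [Walk.getVert_zero]
    | succ n =>
      simp only [Walk.transfer, Walk.getVert_cons_succ]
      exact ih _ n

/-- Walking along darts whose colors follow the cyclic pattern `b` forces the
colors of all vertices of the walk. -/
theorem pattern_getVert {G : SimpleGraph V} {k r : ℕ} {C : V → Fin k} {b : ZMod r → Fin k}
    (hb : Function.Injective b) :
    ∀ {u v : V} (w : G.Walk u v) (j0 : ZMod r),
      (∀ d ∈ w.darts, ∃ j, C d.fst = b j ∧ C d.snd = b (j + 1)) →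
      C u = b j0 → ∀ i ≤ w.length, C (w.getVert i) = b (j0 + i) := by
  intro u v w
  induction w with
  | nil =>
    intro j0 _ hu i hi
    simp only [Walk.length_nil, Nat.le_zero] at hi
    subst hi
    simpa using hu
  | @cons u u' v h w ih =>
    intro j0 hd hu i hi
    obtain ⟨j, hj1, hj2⟩ := hd ⟨(u, u'), h⟩ (by simp [Walk.darts_cons])
    have hjj0 : j = j0 := hb (hj1.symm.trans hu)
    subst hjj0
    have ihw := ih (j + 1) (fun d hdm => hd d (by simp [Walk.darts_cons, hdm])) hj2
    cases i with
    | zero => simpa using hu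
    | succ n =>
      rw [Walk.getVert_cons_succ]
      have hn : n ≤ w.length := by
        rw [Walk.length_cons] at hi; omega
      rw [ihw n hn]
      congr 1
      push_cast
      ring

instance subgraphFinite {G : SimpleGraph V} [Finite V] : Finite G.Subgraph := by
  have : Function.Injective (fun H : G.Subgraph => (H.verts, H.Adj)) := by
    intro H1 H2 h
    simp only [Prod.mk.injEq] at h
    exact SimpleGraph.Subgraph.ext h.1 h.2
  exact Finite.of_injective _ this

end Aux

section Main

variable {V : Type*}

/-- Core lemma: existence of a patterned path from `y` to `x` in `G - xy`. -/
theorem exists_patterned_path (G : SimpleGraph V) (x y : V) (hxy : G.Adj x y)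
    {k : ℕ} (hG : ¬ G.Colorable k) (C : (G.deleteEdges {s(x, y)}).Coloring (Fin k))
    (hCxy : C x = C y) {r : ℕ} (hr2 : 2 ≤ r) (b : ZMod r → Fin k)
    (hb : Function.Injective b) (hb0 : b 0 = C x) :
    ∃ p : (G.deleteEdges {s(x, y)}).Walk y x, p.IsPath ∧
      ∀ d ∈ p.darts, ∃ j, C d.fst = b j ∧ C d.snd = b (j + 1) := by
  classical
  haveI : NeZero r := ⟨by omega⟩
  haveI : Fact (1 < r) := ⟨by omega⟩
  -- the set of vertices reachable from y by a patterned walk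
  set R : Set V := {v | ∃ w : (G.deleteEdges {s(x, y)}).Walk y v,
    ∀ d ∈ w.darts, ∃ j, C d.fst = b j ∧ C d.snd = b (j + 1)} with hR
  have hyR : y ∈ R := ⟨Walk.nil, by simp⟩
  have hext : ∀ u v, u ∈ R → (G.deleteEdges {s(x, y)}).Adj u v → ∀ j, C u = b j → C v = b (j + 1) → v ∈ R := by
    rintro u v ⟨w, hw⟩ hadj j hju hjv
    refine ⟨w.concat hadj, ?_⟩
    intro d hd
    rw [Walk.darts_concat] at hd
    rw [List.concat_eq_append, List.mem_append, List.mem_singleton] at hd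
    rcases hd with hd | hd
    · exact hw d hd
    · subst hd
      exact ⟨j, hju, hjv⟩
  by_cases hxR : x ∈ R
  · obtain ⟨w, hw⟩ := hxR
    refine ⟨w.bypass, w.bypass_isPath, fun d hd => hw d (w.darts_bypass_subset hd)⟩
  · -- recolor to get a proper coloring of G, contradiction
    exfalso
    set c' : V → Fin k := fun v =>
      if h : ∃ j : ZMod r, v ∈ R ∧ C v = b j then b (h.choose + 1) else C v with hc'
    have hval : ∀ v (j : ZMod r), v ∈ R → C v = b j → c' v = b (j + 1) := by
      intro v j hvR hvj
      have hex : ∃ j : ZMod r, v ∈ R ∧ C v = b j := ⟨j, hvR, hvj⟩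
      rw [hc']
      simp only [dif_pos hex]
      have : hex.choose = j := hb (hex.choose_spec.2.symm.trans hvj)
      rw [this]
    have hval2 : ∀ v, (¬ ∃ j : ZMod r, v ∈ R ∧ C v = b j) → c' v = C v := by
      intro v h; rw [hc']; simp only [dif_neg h]
    have hxval : c' x = C x := by
      refine hval2 x ?_
      rintro ⟨j, hj, -⟩; exact hxR hj
    have hyval : c' y = b 1 := by
      have := hval y 0 hyR (hb0 ▸ hCxy.symm ▸ rfl)
      rwa [zero_add] at this
    apply hG
    refine ⟨SimpleGraph.Coloring.mk c' ?_⟩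
    intro u v huv
    by_cases hcase : s(u, v) = s(x, y)
    · -- the edge xy itself
      have hxy' : c' x ≠ c' y := by
        rw [hxval, hyval, ← hb0]
        intro hcontra
        have := hb hcontra
        exact one_ne_zero this.symm
      rw [Sym2.eq_iff] at hcase
      rcases hcase with ⟨rfl, rfl⟩ | ⟨rfl, rfl⟩
      · exact hxy'
      · exact hxy'.symm
    · have huv' : (G.deleteEdges {s(x, y)}).Adj u v := by
        rw [SimpleGraph.deleteEdges_adj]
        exact ⟨huv, by simpa using hcase⟩
      have hCuv : C u ≠ C v := C.valid huv'
      by_cases hu : ∃ j : ZMod r, u ∈ R ∧ C u = b j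
      · obtain ⟨ju, huR, hju⟩ := hu
        rw [hval u ju huR hju]
        by_cases hv : ∃ j : ZMod r, v ∈ R ∧ C v = b j
        · obtain ⟨jv, hvR, hjv⟩ := hv
          rw [hval v jv hvR hjv]
          intro hcontra
          have : ju + 1 = jv + 1 := hb hcontra
          have : ju = jv := by
            have := add_right_cancel this
            exact this
          exact hCuv (by rw [hju, hjv, this])
        · rw [hval2 v hv]
          intro hcontra
          exact hv ⟨ju + 1, hext u v huR huv' ju hju hcontra.symm, hcontra.symm⟩
      · rw [hval2 u hu]
        by_cases hv : ∃ j : ZMod r, v ∈ R ∧ C v = b j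
        · obtain ⟨jv, hvR, hjv⟩ := hv
          rw [hval v jv hvR hjv]
          intro hcontra
          exact hu ⟨jv + 1, hext v u hvR huv'.symm jv hjv hcontra, hcontra⟩
        · rw [hval2 v hv]
          exact hCuv

end Main

theorem stmt0 {V : Type*} [Fintype V] (G : SimpleGraph V) (x y : V) (hxy : G.Adj x y)
    (k : ℕ) (hk : 2 ≤ k)
    (hdel : (G.deleteEdges {s(x, y)}).Colorable k) (hG : ¬ G.Colorable k)
    (r : ℕ) (hr2 : 2 ≤ r) (hrk : r ≤ k) :
    (∏ i ∈ Finset.Icc 1 (r - 1), (k - i)) ≤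
      {H : G.Subgraph | H.Adj x y ∧ ∃ n, n % r = 1 ∧ G.IsCycleSubgraph H n}.ncard := by
  classical
  haveI : NeZero r := ⟨by omega⟩
  obtain ⟨C⟩ := hdel
  -- C x = C y, else G would be k-colorable
  have hCxy : C x = C y := by
    by_contra hne
    apply hG
    refine ⟨SimpleGraph.Coloring.mk C ?_⟩
    intro u v huv
    by_cases hcase : s(u, v) = s(x, y)
    · rw [Sym2.eq_iff] at hcase
      rcases hcase with ⟨rfl, rfl⟩ | ⟨rfl, rfl⟩
      · exact hne
      · exact fun h => hne h.symm
    · exact C.valid (by rw [SimpleGraph.deleteEdges_adj]; exact ⟨huv, by simpa using hcase⟩)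
  set a : Fin k := C x with ha
  have hval_lt : ∀ j : ZMod r, j ≠ 0 → j.val - 1 < r - 1 := by
    intro j hj
    have h1 : j.val < r := ZMod.val_lt j
    have h2 : j.val ≠ 0 := fun h => hj (by rwa [← ZMod.val_eq_zero])
    omega
  -- the cyclic color sequence associated to an injective sequence g
  let bseq : (Fin (r - 1) ↪ {z : Fin k // z ≠ a}) → ZMod r → Fin k := fun g j =>
    if h : j = 0 then a else (g ⟨j.val - 1, hval_lt j h⟩).val
  have hbseq0 : ∀ g, bseq g 0 = a := fun g => dif_pos rfl
  have hbseq_ne : ∀ g (j : ZMod r) (h : j ≠ 0), bseq g j = (g ⟨j.val - 1, hval_lt j h⟩).val := by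
    intro g j h
    simp only [bseq, dif_neg h]
  have hbinj : ∀ g, Function.Injective (bseq g) := by
    intro g j1 j2 h
    by_cases h1 : j1 = 0 <;> by_cases h2 : j2 = 0
    · rw [h1, h2]
    · rw [h1, hbseq0, hbseq_ne g j2 h2] at h
      exact absurd h.symm (g ⟨j2.val - 1, hval_lt j2 h2⟩).2
    · rw [h2, hbseq0, hbseq_ne g j1 h1] at h
      exact absurd h (g ⟨j1.val - 1, hval_lt j1 h1⟩).2
    · rw [hbseq_ne g j1 h1, hbseq_ne g j2 h2] at h
      have := g.injective (Subtype.ext h)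
      have hval : j1.val - 1 = j2.val - 1 := congrArg Fin.val this
      have hv1 : j1.val ≠ 0 := fun hc => h1 (by rwa [← ZMod.val_eq_zero])
      have hv2 : j2.val ≠ 0 := fun hc => h2 (by rwa [← ZMod.val_eq_zero])
      exact ZMod.val_injective r (by omega)
  -- patterned paths
  have hex : ∀ g : Fin (r - 1) ↪ {z : Fin k // z ≠ a},
      ∃ p : (G.deleteEdges {s(x, y)}).Walk y x, p.IsPath ∧
        ∀ d ∈ p.darts, ∃ j, C d.fst = bseq g j ∧ C d.snd = bseq g (j + 1) := by
    intro g
    exact exists_patterned_path G x y hxy hG C hCxy hr2 (bseq g) (hbinj g) (hbseq0 g)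
  let p : (Fin (r - 1) ↪ {z : Fin k // z ≠ a}) → (G.deleteEdges {s(x, y)}).Walk y x :=
    fun g => (hex g).choose
  have hp1 : ∀ g, (p g).IsPath := fun g => (hex g).choose_spec.1
  have hp2 : ∀ g, ∀ d ∈ (p g).darts, ∃ j, C d.fst = bseq g j ∧ C d.snd = bseq g (j + 1) :=
    fun g => (hex g).choose_spec.2
  have hedge : ∀ g, ∀ e ∈ (p g).edges, e ∈ G.edgeSet := by
    intro g e he
    have := (p g).edges_subset_edgeSet he
    rw [SimpleGraph.edgeSet_deleteEdges] at this
    exact this.1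
  let P : (Fin (r - 1) ↪ {z : Fin k // z ≠ a}) → G.Walk y x :=
    fun g => (p g).transfer G (hedge g)
  have hPpath : ∀ g, (P g).IsPath := fun g => (hp1 g).transfer _
  have hsxy_not : ∀ g, s(x, y) ∉ (P g).edges := by
    intro g hmem
    rw [Walk.edges_transfer] at hmem
    have := (p g).edges_subset_edgeSet hmem
    rw [SimpleGraph.edgeSet_deleteEdges] at this
    exact this.2 rfl
  -- positional pattern
  have hpos : ∀ g i, i ≤ (p g).length → C ((p g).getVert i) = bseq g i := by
    intro g i hi
    have := pattern_getVert (hbinj g) (p g) 0 (hp2 g)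
      (by rw [hbseq0 g, ha]; exact hCxy.symm) i hi
    rwa [zero_add] at this
  have hlen_dvd : ∀ g, r ∣ (p g).length := by
    intro g
    have h1 := hpos g (p g).length le_rfl
    rw [Walk.getVert_length] at h1
    have h2 : bseq g ((p g).length : ZMod r) = bseq g 0 := by
      rw [hbseq0 g, ← h1, ha]
    have := hbinj g h2
    rwa [ZMod.natCast_eq_zero_iff] at this
  have hlen_pos : ∀ g, (p g).length ≠ 0 := by
    intro g h0
    have h := (p g).getVert_length
    rw [h0, Walk.getVert_zero] at h
    exact hxy.ne' h
  have hlen_ge : ∀ g, r ≤ (p g).length := by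
    intro g
    obtain ⟨m, hm⟩ := hlen_dvd g
    have := hlen_pos g
    rcases Nat.eq_zero_or_pos m with rfl | hmpos
    · omega
    · calc r = r * 1 := (mul_one r).symm
        _ ≤ r * m := Nat.mul_le_mul_left r hmpos
        _ = (p g).length := hm.symm
  -- the cycles
  let W : (Fin (r - 1) ↪ {z : Fin k // z ≠ a}) → G.Walk x x := fun g => Walk.cons hxy (P g)
  have hcyc : ∀ g, (W g).IsCycle := by
    intro g
    exact (SimpleGraph.Walk.cons_isCycle_iff (P g) hxy).mpr ⟨hPpath g, hsxy_not g⟩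
  let Φ : (Fin (r - 1) ↪ {z : Fin k // z ≠ a}) → G.Subgraph := fun g => (W g).toSubgraph
  have hmem : ∀ g, Φ g ∈ {H : G.Subgraph | H.Adj x y ∧ ∃ n, n % r = 1 ∧ G.IsCycleSubgraph H n} := by
    intro g
    refine ⟨?_, (W g).length, ?_, x, W g, hcyc g, rfl, rfl⟩
    · show (W g).toSubgraph.Adj x y
      simp [W, Walk.toSubgraph]
    · show (W g).length % r = 1
      have : (W g).length = (p g).length + 1 := by
        simp [W, P, Walk.length_cons, Walk.length_transfer]
      rw [this]
      obtain ⟨m, hm⟩ := hlen_dvd g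
      rw [hm, Nat.mul_add_mod]
      exact Nat.mod_eq_of_lt (by omega)
  have hinj : Function.Injective Φ := by
    intro g g' hgg'
    have hedges : ∀ e, e ∈ (P g).edges ↔ e ∈ (P g').edges := by
      intro e
      have hs : (W g).toSubgraph.edgeSet = (W g').toSubgraph.edgeSet := by
        show (Φ g).edgeSet = (Φ g').edgeSet
        rw [hgg']
      rw [Walk.edgeSet_toSubgraph, Walk.edgeSet_toSubgraph] at hs
      have hiff : e ∈ (W g).edges ↔ e ∈ (W g').edges := by
        have := Set.ext_iff.mp hs e
        exact this
      constructor
      · intro he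
        have : e ∈ (W g').edges := hiff.mp (by simp [W, Walk.edges_cons, he])
        rw [show (W g') = Walk.cons hxy (P g') from rfl, Walk.edges_cons, List.mem_cons] at this
        rcases this with rfl | h'
        · exact absurd he (hsxy_not g)
        · exact h'
      · intro he
        have : e ∈ (W g).edges := hiff.mpr (by simp [W, Walk.edges_cons, he])
        rw [show (W g) = Walk.cons hxy (P g) from rfl, Walk.edges_cons, List.mem_cons] at this
        rcases this with rfl | h'
        · exact absurd he (hsxy_not g')
        · exact h'
    have hPP : P g = P g' := path_eq_of_edges_iff (P g) (P g') (hPpath g) (hPpath g') hedges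
    have hgetVert : ∀ i, (p g).getVert i = (p g').getVert i := by
      intro i
      have h1 := getVert_transfer (p g) (hedge g) i
      have h2 := getVert_transfer (p g') (hedge g') i
      rw [show (p g).transfer G (hedge g) = P g from rfl] at h1
      rw [show (p g').transfer G (hedge g') = P g' from rfl] at h2
      rw [← h1, ← h2, hPP]
    have hleneq : (p g).length = (p g').length := by
      have := congrArg Walk.length hPP
      simpa [P, Walk.length_transfer] using this
    have hbeq : ∀ j : ZMod r, bseq g j = bseq g' j := by
      intro j
      have hjval : j.val ≤ (p g).length := le_trans (le_of_lt (ZMod.val_lt j)) (hlen_ge g)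
      have h1 := hpos g j.val hjval
      have h2 := hpos g' j.val (by rw [← hleneq]; exact hjval)
      rw [hgetVert] at h1
      have h3 : bseq g ((j.val : ℕ) : ZMod r) = bseq g' ((j.val : ℕ) : ZMod r) :=
        h1.symm.trans h2
      rwa [ZMod.natCast_zmod_val] at h3
    apply DFunLike.ext
    intro i
    have hival : (i.val + 1 : ℕ) < r := by omega
    set j : ZMod r := ((i.val + 1 : ℕ) : ZMod r) with hj
    have hjval : j.val = i.val + 1 := ZMod.val_cast_of_lt hival
    have hjne : j ≠ 0 := by
      intro hc
      rw [hc, ZMod.val_zero] at hjval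
      omega
    have e1 := hbseq_ne g j hjne
    have e2 := hbseq_ne g' j hjne
    have hfin : (⟨j.val - 1, hval_lt j hjne⟩ : Fin (r - 1)) = i := by
      apply Fin.ext
      simp [hjval]
    rw [hfin] at e1 e2
    exact Subtype.ext (e1.symm.trans ((hbeq j).trans e2))
  -- counting
  have hcard : Fintype.card (Fin (r - 1) ↪ {z : Fin k // z ≠ a}) =
      (k - 1).descFactorial (r - 1) := by
    rw [Fintype.card_embedding_eq, Fintype.card_fin]
    congr 1
    rw [Fintype.card_subtype_compl, Fintype.card_subtype_eq, Fintype.card_fin]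
  have hprod : (∏ i ∈ Finset.Icc 1 (r - 1), (k - i)) = (k - 1).descFactorial (r - 1) := by
    rw [Nat.descFactorial_eq_prod_range]
    have hIcc : Finset.Icc 1 (r - 1) = Finset.Ico 1 r := by
      ext z
      simp only [Finset.mem_Icc, Finset.mem_Ico]
      omega
    rw [hIcc, Finset.prod_Ico_eq_prod_range]
    apply Finset.prod_congr (by congr 1) fun i _ => by omega
  haveI : Finite V := Finite.of_fintype V
  have hle : Fintype.card (Fin (r - 1) ↪ {z : Fin k // z ≠ a}) ≤
      ({H : G.Subgraph | H.Adj x y ∧ ∃ n, n % r = 1 ∧ G.IsCycleSubgraph H n}).ncard := by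
    rw [← Nat.card_coe_set_eq, ← Nat.card_eq_fintype_card]
    exact Nat.card_le_card_of_injective
      (fun g => (⟨Φ g, hmem g⟩ : {H : G.Subgraph | H.Adj x y ∧ ∃ n, n % r = 1 ∧
        G.IsCycleSubgraph H n}))
      (fun g g' h => hinj (congrArg Subtype.val h))
  rw [hprod, ← hcard]
  exact hle
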